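/- Assume that ρ := max_{0 ≤ j ≤ μ−1} (−v(θ_j))/(μ−j) is a positive integer (with the convention that the term for θ_j = 0 is omitted). Let Δ = diag(1, x^ρ, x^{2ρ}, …, x^{(μ−1)ρ}). Then every entry of the matrix B = x^ρ·(Δ^{−1}·G_1·Δ + Δ^{−1}·∂(Δ)) lies in K[[x]], and the matrix B(0) ∈ M_μ(K) obtained by taking the constant coefficient of every entry of B is not nilpotent. -/

import Mathlib

open Finset in
private lemma comp_step {K : Type*} [Field K] {μ : ℕ} (hμ : 0 < μ) (c : Fin μ → K)
    (M : Matrix (Fin μ) (Fin μ) K)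
    (hM : ∀ i j, M i j = if (j : ℕ) = μ - 1 then c i else if (i : ℕ) = (j : ℕ) + 1 then 1 else 0)
    (m : ℕ) (i : Fin μ) :
    (M ^ (m + 1)) i ⟨0, hμ⟩ = c i * (M ^ m) ⟨μ - 1, by omega⟩ ⟨0, hμ⟩ +
      (if h : 1 ≤ (i : ℕ) then (M ^ m) ⟨(i : ℕ) - 1, by omega⟩ ⟨0, hμ⟩ else 0) := by
  have hpow : M ^ (m + 1) = M * M ^ m := by rw [pow_succ']
  rw [hpow, Matrix.mul_apply]
  have hsummand : ∀ j : Fin μ, M i j * (M ^ m) j ⟨0, hμ⟩ =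
      (if j = ⟨μ - 1, by omega⟩ then c i * (M ^ m) j ⟨0, hμ⟩ else 0) +
      (if (i : ℕ) = (j : ℕ) + 1 then (M ^ m) j ⟨0, hμ⟩ else 0) := by
    intro j
    rw [hM]
    by_cases hj : (j : ℕ) = μ - 1
    · have hj' : j = ⟨μ - 1, by omega⟩ := Fin.ext hj
      have hi : ¬ ((i : ℕ) = (j : ℕ) + 1) := by have := i.isLt; omega
      simp only [hj, hj', if_pos, if_true]
      rw [if_neg (by omega : ¬ ((i:ℕ) = μ - 1 + 1)), add_zero]
    · have hj' : ¬ (j = ⟨μ - 1, by omega⟩) := by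
        intro h; exact hj (by rw [h])
      simp only [hj, if_false, hj', if_neg]
      split_ifs <;> simp
  rw [Finset.sum_congr rfl fun j _ => hsummand j, Finset.sum_add_distrib]
  congr 1
  · rw [Finset.sum_ite_eq' Finset.univ]
    simp
  · by_cases h1 : 1 ≤ (i : ℕ)
    · rw [dif_pos h1]
      have : ∀ j : Fin μ, ((i : ℕ) = (j : ℕ) + 1) ↔ j = ⟨(i : ℕ) - 1, by omega⟩ := by
        intro j
        rw [Fin.ext_iff]
        simp only []
        omega
      calc ∑ j : Fin μ, (if (i : ℕ) = (j : ℕ) + 1 then (M ^ m) j ⟨0, hμ⟩ else 0)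
          = ∑ j : Fin μ, (if j = ⟨(i : ℕ) - 1, by omega⟩ then (M ^ m) j ⟨0, hμ⟩ else 0) := by
            exact Finset.sum_congr rfl fun j _ => by rw [if_congr (this j) rfl rfl]
        _ = _ := by rw [Finset.sum_ite_eq' Finset.univ]; simp
    · rw [dif_neg h1]
      have : ∀ j : Fin μ, ¬ ((i : ℕ) = (j : ℕ) + 1) := by intro j; omega
      simp [this]

private lemma comp_base {K : Type*} [Field K] {μ : ℕ} (hμ : 0 < μ) (c : Fin μ → K)
    (M : Matrix (Fin μ) (Fin μ) K)
    (hM : ∀ i j, M i j = if (j : ℕ) = μ - 1 then c i else if (i : ℕ) = (j : ℕ) + 1 then 1 else 0)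
    (m : ℕ) : m < μ → ∀ i : Fin μ,
    (M ^ m) i ⟨0, hμ⟩ = (if (i : ℕ) = m then 1 else 0) := by
  induction m with
  | zero =>
    intro hm i
    rw [pow_zero, Matrix.one_apply]
    congr 1
    rw [Fin.ext_iff]
  | succ m ih =>
    intro hm i
    rw [comp_step hμ c M hM m i]
    have hlast : (M ^ m) (⟨μ - 1, by omega⟩ : Fin μ) ⟨0, hμ⟩ = 0 := by
      rw [ih (by omega) _]
      simp only [if_neg]
      split_ifs with h
      · omega
      · rfl
    rw [hlast, mul_zero, zero_add]
    by_cases h1 : 1 ≤ (i : ℕ)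
    · rw [dif_pos h1, ih (by omega) _]
      simp only []
      split_ifs with h2 h3 h3 <;> first | rfl | omega
    · rw [dif_neg h1]
      split_ifs with h2
      · omega
      · rfl

private lemma comp_rec {K : Type*} [Field K] {μ : ℕ} (hμ : 0 < μ) (c : Fin μ → K)
    (M : Matrix (Fin μ) (Fin μ) K)
    (hM : ∀ i j, M i j = if (j : ℕ) = μ - 1 then c i else if (i : ℕ) = (j : ℕ) + 1 then 1 else 0)
    (m k : ℕ) : ∀ hk : k < μ,
    (M ^ (m + k + 1)) ⟨k, hk⟩ ⟨0, hμ⟩ =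
      ∑ i ∈ Finset.range (k + 1),
        c ⟨i % μ, Nat.mod_lt i hμ⟩ * (M ^ (m + i)) ⟨μ - 1, by omega⟩ ⟨0, hμ⟩ := by
  induction k with
  | zero =>
    intro hk
    rw [comp_step hμ c M hM]
    simp
  | succ k ih =>
    intro hk
    have h1 : m + (k + 1) + 1 = (m + k + 1) + 1 := by omega
    rw [h1, comp_step hμ c M hM]
    have h2 : (1 : ℕ) ≤ ((⟨k + 1, hk⟩ : Fin μ) : ℕ) := by simp
    rw [dif_pos h2]
    have h3 : ((M ^ (m + k + 1)) ⟨((⟨k + 1, hk⟩ : Fin μ) : ℕ) - 1, by omega⟩ ⟨0, hμ⟩ : K)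
        = (M ^ (m + k + 1)) ⟨k, by omega⟩ ⟨0, hμ⟩ := by norm_num
    rw [h3, ih (by omega)]
    conv_rhs => rw [Finset.sum_range_succ]
    have h4 : ((⟨(k + 1) % μ, Nat.mod_lt _ hμ⟩ : Fin μ) : Fin μ) = ⟨k + 1, hk⟩ := by
      apply Fin.ext; simp [Nat.mod_eq_of_lt hk]
    rw [h4]
    exact add_comm _ _

private lemma comp_not_nilpotent {K : Type*} [Field K] {μ : ℕ} (hμ : 0 < μ) (c : Fin μ → K)
    (M : Matrix (Fin μ) (Fin μ) K)
    (hM : ∀ i j, M i j = if (j : ℕ) = μ - 1 then c i else if (i : ℕ) = (j : ℕ) + 1 then 1 else 0)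
    (hc : ∃ j, c j ≠ 0) : ¬ IsNilpotent M := by
  classical
  rintro ⟨N, hN⟩
  set last : Fin μ := ⟨μ - 1, by omega⟩ with hlastdef
  set u : ℕ → K := fun m => (M ^ m) last ⟨0, hμ⟩ with hu
  -- u is zero for m ≥ N
  have hzero : ∀ m, N ≤ m → u m = 0 := by
    intro m hm
    have : M ^ m = 0 := by
      calc M ^ m = M ^ N * M ^ (m - N) := by rw [← pow_add]; congr 1; omega
        _ = 0 := by rw [hN, Matrix.zero_mul]
    simp [hu, this]
  have hbase : u (μ - 1) = 1 := by
    show (M ^ (μ - 1)) last ⟨0, hμ⟩ = 1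
    rw [comp_base hμ c M hM (μ - 1) (by omega) last]
    simp [hlastdef]
  have hNge : μ - 1 ≤ N := by
    by_contra h
    have := hzero (μ - 1) (by omega)
    rw [hbase] at this; exact one_ne_zero this
  -- the recurrence in terms of u
  have hrec : ∀ m, u (m + μ) =
      ∑ i ∈ Finset.range μ, c ⟨i % μ, Nat.mod_lt i hμ⟩ * u (m + i) := by
    intro m
    have h1 : m + μ = m + (μ - 1) + 1 := by omega
    show (M ^ (m + μ)) last ⟨0, hμ⟩ = _
    rw [h1, comp_rec hμ c M hM m (μ - 1) (by omega)]
    have h2 : μ - 1 + 1 = μ := by omega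
    rw [h2]
  -- the greatest m with u m ≠ 0
  set P : ℕ → Prop := fun m => u m ≠ 0 with hP
  have hPbd : ∀ m, P m → m ≤ N := by
    intro m hm
    by_contra h
    exact hm (hzero m (by omega))
  set M0 : ℕ := Nat.findGreatest P N with hM0def
  have hM0 : P M0 := Nat.findGreatest_spec hNge (by rw [hP]; simp only; rw [hbase]; exact one_ne_zero)
  have hM0ge : μ - 1 ≤ M0 := Nat.le_findGreatest hNge (by rw [hP]; simp only; rw [hbase]; exact one_ne_zero)
  have hgt : ∀ m, M0 < m → u m = 0 := by
    intro m hm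
    by_cases h : m ≤ N
    · by_contra h2
      exact Nat.findGreatest_is_greatest hm h h2
    · exact hzero m (by omega)
  -- minimal index with nonzero c
  obtain ⟨j, hj⟩ := hc
  have hex : ∃ n, ∃ h : n < μ, c ⟨n, h⟩ ≠ 0 := ⟨j, j.isLt, by simpa using hj⟩
  set n1 : ℕ := Nat.find hex with hn1def
  obtain ⟨hn1lt, hn1⟩ := Nat.find_spec hex
  have hmin : ∀ n (h : n < μ), n < n1 → c ⟨n, h⟩ = 0 := by
    intro n h hn
    by_contra h2
    exact Nat.find_min hex hn ⟨h, h2⟩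
  -- contradiction
  have key := hrec (M0 - n1)
  have hL : u (M0 - n1 + μ) = 0 := hgt _ (by omega)
  rw [hL] at key
  have hR : ∑ i ∈ Finset.range μ, c ⟨i % μ, Nat.mod_lt i hμ⟩ * u (M0 - n1 + i) =
      c ⟨n1 % μ, Nat.mod_lt n1 hμ⟩ * u (M0 - n1 + n1) := by
    apply Finset.sum_eq_single_of_mem
    · exact Finset.mem_range.mpr hn1lt
    · intro b hb hbne
      rcases Nat.lt_or_ge b n1 with h | h
      · have : c ⟨b % μ, Nat.mod_lt b hμ⟩ = 0 := by
          have hb' : b < μ := Finset.mem_range.mp hb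
          have : (⟨b % μ, Nat.mod_lt b hμ⟩ : Fin μ) = ⟨b, hb'⟩ := by
            apply Fin.ext; simp [Nat.mod_eq_of_lt hb']
          rw [this]
          exact hmin b hb' h
        rw [this, zero_mul]
      · have : u (M0 - n1 + b) = 0 := hgt _ (by omega)
        rw [this, mul_zero]
  rw [hR] at key
  have hMM : M0 - n1 + n1 = M0 := by omega
  rw [hMM] at key
  have : c ⟨n1 % μ, Nat.mod_lt n1 hμ⟩ ≠ 0 := by
    have h4 : (⟨n1 % μ, Nat.mod_lt n1 hμ⟩ : Fin μ) = ⟨n1, hn1lt⟩ := by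
      apply Fin.ext; exact Nat.mod_eq_of_lt hn1lt
    rw [h4]; exact hn1
  exact this (by
    rcases mul_eq_zero.mp key.symm with h | h
    · exact h
    · exact absurd h hM0)

/-- Turrittin–Katz, part 2: if the Poincaré–Katz rank ρ is a positive integer, then after
the shearing by Δ = diag(1, x^ρ, …, x^{(μ−1)ρ}), the matrix x^ρ·(Δ⁻¹G₁Δ + Δ⁻¹∂Δ) has
entries in K[[x]] and non-nilpotent reduction at x = 0. -/
theorem stmt_3 {K : Type*} [Field K]
    (dd : LaurentSeries K → LaurentSeries K)
    (hdd : ∀ (f : LaurentSeries K) (n : ℤ), (dd f).coeff n = n • f.coeff n)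
    (μ : ℕ) (hμ : 1 ≤ μ) (θ : Fin μ → LaurentSeries K)
    (G1 : Matrix (Fin μ) (Fin μ) (LaurentSeries K))
    (hG1 : ∀ i j : Fin μ, G1 i j =
      if (j : ℕ) = μ - 1 then θ i else if (i : ℕ) = (j : ℕ) + 1 then 1 else 0)
    (ρ : ℕ) (hρpos : 1 ≤ ρ)
    (hρub : ∀ j : Fin μ, θ j ≠ 0 →
      (-(((θ j).order : ℚ))) / ((μ : ℚ) - ((j : ℕ) : ℚ)) ≤ (ρ : ℚ))
    (hρmax : ∃ j : Fin μ, θ j ≠ 0 ∧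
      (-(((θ j).order : ℚ))) / ((μ : ℚ) - ((j : ℕ) : ℚ)) = (ρ : ℚ))
    (Δ Δinv : Matrix (Fin μ) (Fin μ) (LaurentSeries K))
    (hΔ : Δ = Matrix.diagonal fun i : Fin μ =>
      (HahnSeries.single ((ρ : ℤ) * ((i : ℕ) : ℤ)) 1 : LaurentSeries K))
    (hΔinv : Δinv = Matrix.diagonal fun i : Fin μ =>
      (HahnSeries.single (-((ρ : ℤ) * ((i : ℕ) : ℤ))) 1 : LaurentSeries K))
    (B : Matrix (Fin μ) (Fin μ) (LaurentSeries K))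
    (hB : B = (HahnSeries.single (ρ : ℤ) 1 : LaurentSeries K) •
      (Δinv * G1 * Δ + Δinv * (Δ.map dd))) :
    (∀ i j : Fin μ, ∀ n : ℤ, n < 0 → (B i j).coeff n = 0) ∧
      ¬ IsNilpotent (Matrix.of fun i j : Fin μ => (B i j).coeff 0) := by
  classical
  have hμ0 : 0 < μ := hμ
  -- dd kills 0 and scales singles
  have hdd0 : dd 0 = 0 := by
    apply HahnSeries.coeff_injective
    funext n
    rw [hdd]; simp
  have hdds : ∀ a : ℤ, dd (HahnSeries.single a (1 : K)) =
      HahnSeries.single a (a • (1 : K)) := by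
    intro a
    apply HahnSeries.coeff_injective
    funext n
    rw [hdd, HahnSeries.coeff_single, HahnSeries.coeff_single]
    split_ifs with h
    · rw [h]
    · simp
  have hsm : ∀ (b : ℤ) (x : LaurentSeries K) (n : ℤ),
      ((HahnSeries.single b (1 : K) : LaurentSeries K) * x).coeff n = x.coeff (n - b) := by
    intro b x n
    have h := HahnSeries.coeff_single_mul_add (r := (1 : K)) (x := x) (a := n - b) (b := b)
    rw [sub_add_cancel] at h
    rw [h, one_mul]
  -- entry formula
  have hBij : ∀ i j : Fin μ, B i j =
      HahnSeries.single (ρ : ℤ) 1 *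
        ((HahnSeries.single (-((ρ : ℤ) * ((i : ℕ) : ℤ))) 1 * G1 i j *
            HahnSeries.single ((ρ : ℤ) * ((j : ℕ) : ℤ)) 1) +
          (if i = j then HahnSeries.single (-((ρ : ℤ) * ((i : ℕ) : ℤ))) 1 *
            dd (HahnSeries.single ((ρ : ℤ) * ((i : ℕ) : ℤ)) 1) else 0)) := by
    intro i j
    rw [hB, hΔ, hΔinv]
    simp only [Matrix.smul_apply, smul_eq_mul, Matrix.add_apply, Matrix.mul_diagonal,
      Matrix.diagonal_mul, Matrix.diagonal_map hdd0, Matrix.diagonal_mul_diagonal,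
      Matrix.diagonal_apply]
  -- coefficient formula
  have key : ∀ (i j : Fin μ) (n : ℤ), (B i j).coeff n =
      (if (j : ℕ) = μ - 1 then (θ i).coeff (n - (ρ : ℤ) * ((μ : ℤ) - ((i : ℕ) : ℤ)))
       else if (i : ℕ) = (j : ℕ) + 1 then (if n = 0 then (1 : K) else 0) else 0)
      + (if i = j then (if n = (ρ : ℤ) then ((ρ : ℤ) * ((i : ℕ) : ℤ)) • (1 : K) else 0)
          else 0) := by
    intro i j n
    rw [hBij, hsm, HahnSeries.coeff_add]
    congr 1
    · rw [hG1]
      by_cases hj : (j : ℕ) = μ - 1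
      · rw [if_pos hj, if_pos hj]
        have h1 : HahnSeries.single (-((ρ : ℤ) * ((i : ℕ) : ℤ))) (1 : K) * θ i *
            HahnSeries.single ((ρ : ℤ) * ((j : ℕ) : ℤ)) 1 =
            HahnSeries.single (-((ρ : ℤ) * ((i : ℕ) : ℤ)) + (ρ : ℤ) * ((j : ℕ) : ℤ)) 1 * θ i := by
          rw [mul_right_comm, HahnSeries.single_mul_single, one_mul]
        rw [h1, hsm]
        congr 1
        have hjz : ((j : ℕ) : ℤ) = (μ : ℤ) - 1 := by omega
        rw [hjz]; ring
      · rw [if_neg hj, if_neg hj]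
        by_cases hi : (i : ℕ) = (j : ℕ) + 1
        · rw [if_pos hi, if_pos hi, mul_one, HahnSeries.single_mul_single, one_mul,
            HahnSeries.coeff_single]
          have hiz : ((i : ℕ) : ℤ) = ((j : ℕ) : ℤ) + 1 := by omega
          have hiff : (n - (ρ : ℤ) = -((ρ : ℤ) * ((i : ℕ) : ℤ)) + (ρ : ℤ) * ((j : ℕ) : ℤ))
              ↔ n = 0 := by
            rw [hiz]
            constructor <;> intro h <;> nlinarith [h]
          by_cases h0 : n = 0
          · rw [if_pos (hiff.mpr h0), if_pos h0]
          · rw [if_neg (fun hh => h0 (hiff.mp hh)), if_neg h0]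
        · rw [if_neg hi, if_neg hi, mul_zero, zero_mul]
          simp
    · by_cases hij : i = j
      · rw [if_pos hij, if_pos hij, hdds, HahnSeries.single_mul_single,
          neg_add_cancel, one_mul, HahnSeries.coeff_single]
        by_cases h1 : n = (ρ : ℤ)
        · rw [if_pos h1, if_pos (by omega : n - (ρ : ℤ) = 0)]
        · rw [if_neg h1, if_neg (by omega : ¬ (n - (ρ : ℤ) = 0))]
      · rw [if_neg hij, if_neg hij]
        simp
  -- order bound for the θ's
  have horder : ∀ i : Fin μ, θ i ≠ 0 → -((ρ : ℤ) * ((μ : ℤ) - ((i : ℕ) : ℤ))) ≤ (θ i).order := by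
    intro i hi
    have h1 := hρub i hi
    have hpos : (0 : ℚ) < (μ : ℚ) - ((i : ℕ) : ℚ) := by
      have := i.isLt
      have : ((i : ℕ) : ℚ) < (μ : ℚ) := by exact_mod_cast this
      linarith
    rw [div_le_iff₀ hpos] at h1
    have h2 : -(((θ i).order : ℚ)) ≤ ((ρ : ℤ) * ((μ : ℤ) - ((i : ℕ) : ℤ)) : ℤ) := by
      push_cast
      linarith
    have h3 : ((-((ρ : ℤ) * ((μ : ℤ) - ((i : ℕ) : ℤ))) : ℤ) : ℚ) ≤ (((θ i).order : ℤ) : ℚ) := by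
      push_cast at h2 ⊢
      linarith
    exact_mod_cast h3
  constructor
  · intro i j n hn
    rw [key]
    have h2 : (if i = j then (if n = (ρ : ℤ) then ((ρ : ℤ) * ((i : ℕ) : ℤ)) • (1 : K) else 0)
        else 0) = 0 := by
      split_ifs with ha hb
      · omega
      · rfl
      · rfl
    rw [h2, add_zero]
    split_ifs with hj hi h0
    · by_cases hθ : θ i = 0
      · simp [hθ]
      · apply HahnSeries.coeff_eq_zero_of_lt_order
        have h3 := horder i hθ
        have h4 : (0 : ℤ) < (ρ : ℤ) * ((μ : ℤ) - ((i : ℕ) : ℤ)) := by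
          have := i.isLt
          have h5 : (0:ℤ) < (μ : ℤ) - ((i : ℕ) : ℤ) := by omega
          positivity
        omega
    · omega
    · rfl
    · rfl
  · -- non-nilpotency
    set c : Fin μ → K := fun i => (θ i).coeff (-((ρ : ℤ) * ((μ : ℤ) - ((i : ℕ) : ℤ)))) with hc
    apply comp_not_nilpotent hμ0 c
    · intro i j
      rw [Matrix.of_apply, key]
      have h2 : (if i = j then (if (0:ℤ) = (ρ : ℤ) then ((ρ : ℤ) * ((i : ℕ) : ℤ)) • (1 : K)
          else 0) else 0) = 0 := by
        split_ifs with ha hb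
        · omega
        · rfl
        · rfl
      rw [h2, add_zero]
      have h3 : (if (0:ℤ) = 0 then (1:K) else 0) = 1 := if_pos rfl
      rw [h3]
      split_ifs with hj hi
      · rw [zero_sub]
      · rfl
      · rfl
    · obtain ⟨j, hj0, hjeq⟩ := hρmax
      refine ⟨j, ?_⟩
      have hpos : (0 : ℚ) < (μ : ℚ) - ((j : ℕ) : ℚ) := by
        have := j.isLt
        have : ((j : ℕ) : ℚ) < (μ : ℚ) := by exact_mod_cast this
        linarith
      have h1 : -(((θ j).order : ℚ)) = (ρ : ℚ) * ((μ : ℚ) - ((j : ℕ) : ℚ)) := by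
        rw [div_eq_iff (ne_of_gt hpos)] at hjeq
        linarith [hjeq]
      have h2 : (θ j).order = -((ρ : ℤ) * ((μ : ℤ) - ((j : ℕ) : ℤ))) := by
        have : (((θ j).order : ℚ)) = ((-((ρ : ℤ) * ((μ : ℤ) - ((j : ℕ) : ℤ))) : ℤ) : ℚ) := by
          push_cast
          linarith
        exact_mod_cast this
      rw [hc]
      simp only
      rw [← h2]
      exact HahnSeries.coeff_order_eq_zero.not.mpr hj0
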